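/- A subset A of the space k^ω_⊥ of partial functions ω ⇀ {0,…,k−1} is of the form A_f = {g : g ⊆ f} for some total function f : ω → k if and only if A is maximal (with respect to inclusion) among closed subsets C of k^ω_⊥ satisfying: for all open U, V, if U ∩ C ≠ ∅ and V ∩ C ≠ ∅ then U ∩ V ∩ C ≠ ∅. -/

import Mathlib

/-- Partial functions from `ω` to `{0,…,k−1}`, modeled as `ℕ → Option (Fin k)`. -/
abbrev PartFn (k : ℕ) := ℕ → Option (Fin k)

/-- The subfunction relation: `g ⊆ f` iff `g x = f x` whenever `g x` is defined. -/
def Subfn {k : ℕ} (g f : PartFn k) : Prop := ∀ x v, g x = some v → f x = some v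

/-- `f` has finite graph. -/
def FinGraph {k : ℕ} (f : PartFn k) : Prop := {x | f x ≠ none}.Finite

/-- The Scott topology on `k^ω_⊥`, generated by the sets `{g : f₀ ⊆ g}` for `f₀`
with finite graph. -/
instance partFnTop (k : ℕ) : TopologicalSpace (PartFn k) :=
  TopologicalSpace.generateFrom
    {U | ∃ f₀ : PartFn k, FinGraph f₀ ∧ U = {g | Subfn f₀ g}}

/-- The set `A_f` of all partial subfunctions of the total function `f`. -/
def Af {k : ℕ} (f : ℕ → Fin k) : Set (PartFn k) := {g | ∀ x v, g x = some v → v = f x}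

/-- `C` is irreducible: any two open sets meeting `C` intersect inside `C`. -/
def Irr {k : ℕ} (C : Set (PartFn k)) : Prop :=
  ∀ U V : Set (PartFn k), IsOpen U → IsOpen V →
    (U ∩ C).Nonempty → (V ∩ C).Nonempty → (U ∩ V ∩ C).Nonempty

lemma open_eval {k : ℕ} (x : ℕ) (v : Fin k) : IsOpen {g : PartFn k | g x = some v} := by
  apply TopologicalSpace.GenerateOpen.basic
  refine ⟨fun y => if y = x then some v else none, ?_, ?_⟩
  · apply Set.Finite.subset (Set.finite_singleton x)
    intro y hy
    simp only [Set.mem_setOf_eq] at hy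
    by_contra h
    exact hy (if_neg h)
  · ext g
    simp only [Set.mem_setOf_eq, Subfn]
    constructor
    · intro h y w hw
      by_cases hyx : y = x
      · subst hyx; rw [if_pos rfl] at hw; cases hw; exact h
      · rw [if_neg hyx] at hw; exact nomatch hw
    · intro h
      exact h x v (if_pos rfl)

lemma isOpen_upward {k : ℕ} {U : Set (PartFn k)} (hU : IsOpen U) :
    ∀ g h : PartFn k, Subfn g h → g ∈ U → h ∈ U := by
  induction hU with
  | basic U hU =>
      obtain ⟨f₀, -, rfl⟩ := hU
      intro g h gh hg x v hx
      exact gh x v (hg x v hx)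
  | univ => intros; trivial
  | inter U V _ _ ihU ihV =>
      intro g h gh hg
      exact ⟨ihU g h gh hg.1, ihV g h gh hg.2⟩
  | sUnion S _ ih =>
      rintro g h gh ⟨U, hU, hg⟩
      exact ⟨U, hU, ih U hU g h gh hg⟩

lemma closed_Af {k : ℕ} (f : ℕ → Fin k) : IsClosed (Af f) := by
  rw [← isOpen_compl_iff]
  have : (Af f)ᶜ = ⋃ x, ⋃ v ∈ {v : Fin k | v ≠ f x}, {g : PartFn k | g x = some v} := by
    ext g
    simp only [Af, Set.mem_compl_iff, Set.mem_setOf_eq, Set.mem_iUnion]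
    push_neg
    constructor
    · rintro ⟨x, v, hx, hv⟩; exact ⟨x, v, hv, hx⟩
    · rintro ⟨x, v, hv, hx⟩; exact ⟨x, v, hx, hv⟩
  rw [this]
  exact isOpen_iUnion fun x => isOpen_biUnion fun v _ => open_eval x v

lemma irr_Af {k : ℕ} (f : ℕ → Fin k) : Irr (Af f) := by
  rintro U V hU hV ⟨u, huU, huA⟩ ⟨w, hwV, hwA⟩
  have hsub : ∀ g ∈ Af f, Subfn g (fun x => some (f x)) := by
    intro g hg x v hx
    rw [hg x v hx]
  refine ⟨fun x => some (f x), ⟨?_, ?_⟩, ?_⟩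
  · exact isOpen_upward hU u _ (hsub u huA) huU
  · exact isOpen_upward hV w _ (hsub w hwA) hwV
  · intro x v hx; cases hx; rfl

theorem stmt14 (k : ℕ) (hk : 2 ≤ k) (A : Set (PartFn k)) :
    (∃ f : ℕ → Fin k, A = Af f) ↔
      (IsClosed A ∧ Irr A ∧
        ∀ C : Set (PartFn k), IsClosed C → Irr C → A ⊆ C → A = C) := by
  constructor
  · rintro ⟨f, rfl⟩
    refine ⟨closed_Af f, irr_Af f, ?_⟩
    intro C hC hIrr hAC
    refine Set.Subset.antisymm hAC ?_
    intro g hg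
    by_contra hgA
    simp only [Af, Set.mem_setOf_eq] at hgA
    push_neg at hgA
    obtain ⟨x, v, hx, hv⟩ := hgA
    have h1 : ({h : PartFn k | h x = some v} ∩ C).Nonempty := ⟨g, hx, hg⟩
    have h2 : ({h : PartFn k | h x = some (f x)} ∩ C).Nonempty := by
      refine ⟨fun y => if y = x then some (f x) else none, if_pos rfl, hAC ?_⟩
      intro y w hw
      dsimp only at hw
      by_cases hyx : y = x
      · subst hyx; rw [if_pos rfl] at hw; cases hw; rfl
      · rw [if_neg hyx] at hw; exact nomatch hw
    obtain ⟨h, ⟨h1', h2'⟩, -⟩ := hIrr _ _ (open_eval x v) (open_eval x (f x)) h1 h2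
    rw [Set.mem_setOf_eq] at h1' h2'
    rw [h1'] at h2'
    exact hv (Option.some_injective _ h2')
  · rintro ⟨hA, hIrr, hmax⟩
    classical
    have hz : (0 : ℕ) < k := by omega
    set f : ℕ → Fin k := fun x =>
      if h : ∃ v : Fin k, ∃ g ∈ A, g x = some v then h.choose else ⟨0, hz⟩ with hf
    have hsub : A ⊆ Af f := by
      intro g hg x v hx
      have hex : ∃ v : Fin k, ∃ g ∈ A, g x = some v := ⟨v, g, hg, hx⟩
      have hfx : f x = hex.choose := by simp [hf, dif_pos hex]
      obtain ⟨g₀, hg₀, hg₀x⟩ := hex.choose_spec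
      obtain ⟨h, ⟨h1', h2'⟩, -⟩ := hIrr _ _ (open_eval x v) (open_eval x hex.choose)
        ⟨g, hx, hg⟩ ⟨g₀, hg₀x, hg₀⟩
      rw [Set.mem_setOf_eq] at h1' h2'
      rw [h1'] at h2'
      rw [hfx]
      exact Option.some_injective _ h2'
    exact ⟨f, hmax (Af f) (closed_Af f) (irr_Af f) hsub⟩
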